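/- Let n = 3^s·t where s ≥ 1, t > 1 and 3 ∤ t. Then every x ∈ {0, 1, ..., t−1} lies in the H-orbit of 0. -/

import Mathlib

lemma shuffleAux.div_lt (k n : ℕ) (x : Fin (k * n)) : (x : ℕ) / n < k := by
  have hx := x.isLt
  have hn : 0 < n := by
    rcases Nat.eq_zero_or_pos n with rfl | h
    · simp at hx
    · exact h
  exact (Nat.div_lt_iff_lt_mul hn).mpr hx

lemma shuffleAux.mod_lt (k n : ℕ) (x : Fin (k * n)) : (x : ℕ) % n < n := by
  have hx := x.isLt
  have hn : 0 < n := by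
    rcases Nat.eq_zero_or_pos n with rfl | h
    · simp at hx
    · exact h
  exact Nat.mod_lt _ hn

lemma shuffleAux.bound1 (k n : ℕ) (x : Fin (k * n)) :
    k * ((x : ℕ) % n) + (x : ℕ) / n < k * n := by
  have h1 := shuffleAux.mod_lt k n x
  have h2 := shuffleAux.div_lt k n x
  calc k * ((x : ℕ) % n) + (x : ℕ) / n
      < k * ((x : ℕ) % n) + k := by omega
    _ = k * ((x : ℕ) % n + 1) := by ring
    _ ≤ k * n := Nat.mul_le_mul_left _ (by omega)

lemma shuffleAux.bound2 (k n : ℕ) (x : Fin (k * n)) (j : Fin k) :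
    (x : ℕ) % n + (j : ℕ) * n < k * n := by
  have h1 := shuffleAux.mod_lt k n x
  have h2 := j.isLt
  calc (x : ℕ) % n + (j : ℕ) * n
      < n + (j : ℕ) * n := by omega
    _ = ((j : ℕ) + 1) * n := by ring
    _ ≤ k * n := Nat.mul_le_mul_right _ (by omega)

/-- The standard shuffle `σ` on a deck of `k * n` cards, where the card in position
`i + j·n` (`i ∈ [n]`, `j ∈ [k]`) is sent to position `k·i + j`; equivalently
`σ(x) = k·(x mod n) + ⌊x / n⌋`. -/
noncomputable def stdShuffle (k n : ℕ) : Equiv.Perm (Fin (k * n)) :=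
  Equiv.ofBijective
    (fun x => ⟨k * ((x : ℕ) % n) + (x : ℕ) / n, shuffleAux.bound1 k n x⟩)
    (Finite.injective_iff_bijective.mp (by
      intro x y hxy
      simp only [Fin.mk.injEq] at hxy
      have hk : 0 < k := lt_of_le_of_lt (Nat.zero_le _) (shuffleAux.div_lt k n x)
      have key : ∀ z : Fin (k * n),
          (k * ((z : ℕ) % n) + (z : ℕ) / n) % k = (z : ℕ) / n ∧
          (k * ((z : ℕ) % n) + (z : ℕ) / n) / k = (z : ℕ) % n := by
        intro z
        have hz := shuffleAux.div_lt k n z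
        constructor
        · rw [Nat.mul_add_mod, Nat.mod_eq_of_lt hz]
        · rw [Nat.mul_add_div hk, Nat.div_eq_of_lt hz, Nat.add_zero]
      obtain ⟨h1x, h2x⟩ := key x
      obtain ⟨h1y, h2y⟩ := key y
      rw [hxy] at h1x h2x
      have hd : (x : ℕ) / n = (y : ℕ) / n := by omega
      have hm : (x : ℕ) % n = (y : ℕ) % n := by omega
      apply Fin.ext
      rw [← Nat.div_add_mod (x : ℕ) n, ← Nat.div_add_mod (y : ℕ) n, hd, hm]))

/-- The permutation `ρ_τ` induced by a permutation `τ` of the `k` piles: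
`ρ_τ(i + j·n) = i + τ(j)·n` for `i ∈ [n]`, `j ∈ [k]`. -/
noncomputable def pilePerm (k n : ℕ) (τ : Equiv.Perm (Fin k)) : Equiv.Perm (Fin (k * n)) :=
  Equiv.ofBijective
    (fun x => ⟨(x : ℕ) % n + ((τ ⟨(x : ℕ) / n, shuffleAux.div_lt k n x⟩ : Fin k) : ℕ) * n,
      shuffleAux.bound2 k n x _⟩)
    (Finite.injective_iff_bijective.mp (by
      intro x y hxy
      simp only [Fin.mk.injEq] at hxy
      have hn : 0 < n := lt_of_le_of_lt (Nat.zero_le _) (shuffleAux.mod_lt k n x)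
      have key : ∀ z : Fin (k * n),
          ((z : ℕ) % n + ((τ ⟨(z : ℕ) / n, shuffleAux.div_lt k n z⟩ : Fin k) : ℕ) * n) % n
            = (z : ℕ) % n ∧
          ((z : ℕ) % n + ((τ ⟨(z : ℕ) / n, shuffleAux.div_lt k n z⟩ : Fin k) : ℕ) * n) / n
            = ((τ ⟨(z : ℕ) / n, shuffleAux.div_lt k n z⟩ : Fin k) : ℕ) := by
        intro z
        have h1 := shuffleAux.mod_lt k n z
        constructor
        · rw [Nat.add_mul_mod_self_right, Nat.mod_eq_of_lt h1]
        · rw [Nat.add_mul_div_right _ _ hn, Nat.div_eq_of_lt h1, Nat.zero_add]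
      obtain ⟨h1x, h2x⟩ := key x
      obtain ⟨h1y, h2y⟩ := key y
      rw [hxy] at h1x h2x
      have hm : (x : ℕ) % n = (y : ℕ) % n := by omega
      have hv : ((τ ⟨(x : ℕ) / n, shuffleAux.div_lt k n x⟩ : Fin k) : ℕ)
          = ((τ ⟨(y : ℕ) / n, shuffleAux.div_lt k n y⟩ : Fin k) : ℕ) := by omega
      have hτ : (⟨(x : ℕ) / n, shuffleAux.div_lt k n x⟩ : Fin k)
          = ⟨(y : ℕ) / n, shuffleAux.div_lt k n y⟩ := τ.injective (Fin.ext hv)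
      have hd : (x : ℕ) / n = (y : ℕ) / n := congrArg Fin.val hτ
      apply Fin.ext
      rw [← Nat.div_add_mod (x : ℕ) n, ← Nat.div_add_mod (y : ℕ) n, hd, hm]))

/-- The shuffle group `G_{k,kn}`, generated by the standard shuffle `σ` together with
the pile permutations `ρ_τ` for all `τ ∈ Sym([k])`. -/
noncomputable def shuffleGroup (k n : ℕ) : Subgroup (Equiv.Perm (Fin (k * n))) :=
  Subgroup.closure ({stdShuffle k n} ∪ Set.range (pilePerm k n))

/-- For `k = 3`, the subgroup `H = ⟨σ, ρ_{(01)}⟩` of `Sym([3n])`, where `(01)` is the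
transposition of `Sym([3])` swapping `0` and `1`. -/
noncomputable def shuffleH (n : ℕ) : Subgroup (Equiv.Perm (Fin (3 * n))) :=
  Subgroup.closure {stdShuffle 3 n, pilePerm 3 n (Equiv.swap 0 1)}


section StepOneAux

open Equiv

/-- Orbit membership predicate: `v` (as a natural number) is in the `shuffleH n`-orbit of `0`. -/
def myP (n v : ℕ) : Prop :=
  ∃ (h0 : 0 < 3 * n) (hv : v < 3 * n) (g : Equiv.Perm (Fin (3 * n))),
    g ∈ shuffleH n ∧ g ⟨0, h0⟩ = ⟨v, hv⟩

lemma myP_zero (n : ℕ) (h0 : 0 < 3 * n) : myP n 0 := ⟨h0, h0, 1, one_mem _, rfl⟩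

lemma stepP (n : ℕ) (g : Equiv.Perm (Fin (3 * n))) (hg : g ∈ shuffleH n)
    (v w : ℕ) (hv : v < 3 * n) (hw : w < 3 * n)
    (hgv : g ⟨v, hv⟩ = ⟨w, hw⟩) : myP n v ↔ myP n w := by
  constructor
  · rintro ⟨h0, hv', g₀, hg₀, he⟩
    exact ⟨h0, hw, g * g₀, mul_mem hg hg₀, by
      rw [Equiv.Perm.mul_apply, he]; exact hgv⟩
  · rintro ⟨h0, hw', g₀, hg₀, he⟩
    refine ⟨h0, hv, g⁻¹ * g₀, mul_mem (inv_mem hg) hg₀, ?_⟩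
    rw [Equiv.Perm.mul_apply, he]
    have : g⁻¹ ⟨w, hw⟩ = ⟨v, hv⟩ := by
      rw [← hgv]; exact Equiv.symm_apply_apply g _
    exact this

lemma sigma_mem (n : ℕ) : stdShuffle 3 n ∈ shuffleH n :=
  Subgroup.subset_closure (Set.mem_insert _ _)

lemma rho_mem (n : ℕ) : pilePerm 3 n (Equiv.swap 0 1) ∈ shuffleH n :=
  Subgroup.subset_closure (Set.mem_insert_of_mem _ rfl)

lemma sigma_val (n v : ℕ) (hv3 : v < 3 * n) :
    ((stdShuffle 3 n ⟨v, hv3⟩ : Fin (3 * n)) : ℕ) = 3 * (v % n) + v / n := rfl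

lemma rho_val (n v : ℕ) (hv3 : v < 3 * n) :
    ((pilePerm 3 n (Equiv.swap 0 1) ⟨v, hv3⟩ : Fin (3 * n)) : ℕ)
      = v % n + ((Equiv.swap (0 : Fin 3) 1 ⟨v / n, shuffleAux.div_lt 3 n ⟨v, hv3⟩⟩ : Fin 3) : ℕ) * n :=
  rfl

lemma sigma_lo (n v : ℕ) (hv : v < n) (hv3 : v < 3 * n) (h3 : 3 * v < 3 * n) :
    stdShuffle 3 n ⟨v, hv3⟩ = ⟨3 * v, h3⟩ := by
  apply Fin.ext
  rw [sigma_val n v hv3, Nat.mod_eq_of_lt hv, Nat.div_eq_of_lt hv]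
  simp

lemma sigma_mid (n v : ℕ) (hn0 : 0 < n) (hv : v < n) (hvn : v + n < 3 * n)
    (hr : 3 * v + 1 < 3 * n) :
    stdShuffle 3 n ⟨v + n, hvn⟩ = ⟨3 * v + 1, hr⟩ := by
  apply Fin.ext
  rw [sigma_val n (v + n) hvn, Nat.add_mod_right, Nat.mod_eq_of_lt hv,
    Nat.add_div_right _ hn0, Nat.div_eq_of_lt hv]

lemma rho_lo (n v : ℕ) (hn0 : 0 < n) (hv : v < n) (hv3 : v < 3 * n)
    (hr : v + n < 3 * n) :
    pilePerm 3 n (Equiv.swap 0 1) ⟨v, hv3⟩ = ⟨v + n, hr⟩ := by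
  apply Fin.ext
  rw [rho_val n v hv3]
  have hfin : (⟨v / n, shuffleAux.div_lt 3 n ⟨v, hv3⟩⟩ : Fin 3) = 0 := by
    apply Fin.ext
    simp [Nat.div_eq_of_lt hv]
  rw [hfin, Equiv.swap_apply_left, Nat.mod_eq_of_lt hv]
  simp

lemma moveM1 (n v : ℕ) (hn0 : 0 < n) (hv : v < n) : myP n (3 * v) ↔ myP n v :=
  (stepP n _ (sigma_mem n) v (3 * v) (by omega) (by omega)
    (sigma_lo n v hv (by omega) (by omega))).symm

lemma moveRho (n v : ℕ) (hn0 : 0 < n) (hv : v < n) : myP n v ↔ myP n (v + n) :=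
  stepP n _ (rho_mem n) v (v + n) (by omega) (by omega)
    (rho_lo n v hn0 hv (by omega) (by omega))

lemma moveM2 (n v : ℕ) (hn0 : 0 < n) (hv : v < n) : myP n (3 * v + 1) ↔ myP n v :=
  ((moveRho n v hn0 hv).trans
    (stepP n _ (sigma_mem n) (v + n) (3 * v + 1) (by omega) (by omega)
      (sigma_mid n v hn0 hv (by omega) (by omega)))).symm

lemma moveT (n m p : ℕ) (hnm : n = 3 * m) (hm0 : 0 < m) (hp : p < m) :
    myP n (p + m) ↔ myP n p := by
  have hn0 : 0 < n := by omega
  have h1 : myP n (3 * (p + m)) ↔ myP n (p + m) := moveM1 n (p + m) hn0 (by omega)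
  have h2 : myP n (3 * p) ↔ myP n (3 * p + n) := moveRho n (3 * p) hn0 (by omega)
  have h3 : myP n (3 * p) ↔ myP n p := moveM1 n p hn0 (by omega)
  have he : 3 * (p + m) = 3 * p + n := by omega
  rw [he] at h1
  exact h1.symm.trans (h2.symm.trans h3)

lemma moveIter (n : ℕ) (hn0 : 0 < n) (j v : ℕ) :
    3 ^ j * v < n → (myP n (3 ^ j * v) ↔ myP n v) := by
  induction j with
  | zero => intro h; simp
  | succ j ih =>
    intro h
    have hmono : 3 ^ j * v ≤ 3 ^ (j + 1) * v :=
      Nat.mul_le_mul_right v (Nat.pow_le_pow_right (by norm_num) (Nat.le_succ j))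
    have hj : 3 ^ j * v < n := lt_of_le_of_lt hmono h
    have e : 3 ^ (j + 1) * v = 3 * (3 ^ j * v) := by rw [pow_succ]; ring
    rw [e]
    exact (moveM1 n (3 ^ j * v) hn0 hj).trans (ih hj)

lemma golden (s t n : ℕ) (hs : 1 ≤ s) (ht0 : 0 < t) (hn : n = 3 ^ s * t)
    (u : ℕ) (h1 : t ≤ u) (h2 : u < 2 * t) : myP n u ↔ myP n (u - t) := by
  have hs' : s - 1 + 1 = s := by omega
  have hpow : (0 : ℕ) < 3 ^ (s - 1) := pow_pos (by norm_num) _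
  have hps : (3 : ℕ) ^ s = 3 * 3 ^ (s - 1) := by
    conv_lhs => rw [← hs']
    rw [pow_succ]; ring
  have hm : n = 3 * (3 ^ (s - 1) * t) := by rw [hn, hps]; ring
  set m := 3 ^ (s - 1) * t with hmdef
  have hm0 : 0 < m := Nat.mul_pos hpow ht0
  have hn0 : 0 < n := by omega
  have keyeq : 3 ^ (s - 1) * u = 3 ^ (s - 1) * (u - t) + m := by
    have hu : u - t + t = u := Nat.sub_add_cancel h1
    calc 3 ^ (s - 1) * u = 3 ^ (s - 1) * ((u - t) + t) := by rw [hu]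
      _ = 3 ^ (s - 1) * (u - t) + 3 ^ (s - 1) * t := by rw [Nat.mul_add]
  have e1 : 3 ^ (s - 1) * (u + 1) ≤ 3 ^ (s - 1) * (2 * t) :=
    Nat.mul_le_mul_left _ (by omega)
  have e2 : (3 : ℕ) ^ (s - 1) * (2 * t) = 2 * m := by rw [hmdef]; ring
  have e3 : 3 ^ (s - 1) * (u + 1) = 3 ^ (s - 1) * u + 3 ^ (s - 1) := by
    rw [Nat.mul_add, Nat.mul_one]
  have hb1 : 3 ^ (s - 1) * u < n := by omega
  have e4 : 3 ^ (s - 1) * (u - t + 1) ≤ 3 ^ (s - 1) * t :=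
    Nat.mul_le_mul_left _ (by omega)
  have e5 : 3 ^ (s - 1) * (u - t + 1) = 3 ^ (s - 1) * (u - t) + 3 ^ (s - 1) := by
    rw [Nat.mul_add, Nat.mul_one]
  have hplt : 3 ^ (s - 1) * (u - t) < m := by omega
  have hb2 : 3 ^ (s - 1) * (u - t) < n := by omega
  have i1 := moveIter n hn0 (s - 1) u hb1
  have i2 := moveIter n hn0 (s - 1) (u - t) hb2
  have tt := moveT n m (3 ^ (s - 1) * (u - t)) hm hm0 hplt
  rw [keyeq] at i1
  exact (i1.symm.trans tt).trans i2

lemma step_one_key (s t n : ℕ) (hs : 1 ≤ s) (ht : 1 < t) (h3t : ¬ 3 ∣ t)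
    (hn : n = 3 ^ s * t) : ∀ x, x < t → myP n x := by
  have h3s : (3 : ℕ) ≤ 3 ^ s := by
    calc (3 : ℕ) = 3 ^ 1 := (pow_one 3).symm
      _ ≤ 3 ^ s := Nat.pow_le_pow_right (by norm_num) hs
  have htn : 3 * t ≤ n := by
    rw [hn]; exact Nat.mul_le_mul_right t h3s
  have hn0 : 0 < n := by omega
  have ht3 : t % 3 = 1 ∨ t % 3 = 2 := by omega
  intro x
  induction x using Nat.strong_induction_on with
  | _ x IH =>
    intro hx
    rcases Nat.eq_zero_or_pos x with rfl | hx1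
    · exact myP_zero n (by omega)
    have hm : x % 3 = 0 ∨ x % 3 = 1 ∨ x % 3 = 2 := by omega
    rcases hm with hm | hm | hm
    · -- x ≡ 0 (mod 3)
      have hy : x = 3 * (x / 3) := by omega
      rw [hy]
      exact (moveM1 n (x / 3) hn0 (by omega)).mpr (IH (x / 3) (by omega) (by omega))
    · -- x ≡ 1 (mod 3)
      have hy : x = 3 * (x / 3) + 1 := by omega
      rw [hy]
      exact (moveM2 n (x / 3) hn0 (by omega)).mpr (IH (x / 3) (by omega) (by omega))
    · -- x ≡ 2 (mod 3)
      have hx2 : 2 ≤ x := by omega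
      rcases ht3 with ht3 | ht3
      · -- t ≡ 1 (mod 3)
        have hxt : x + 1 < t := by omega
        have hz : x + 1 = 3 * ((x + 1) / 3) := by omega
        have hPz : myP n ((x + 1) / 3) := IH ((x + 1) / 3) (by omega) (by omega)
        have hPx1 : myP n (x + 1) := by
          rw [hz]; exact (moveM1 n ((x + 1) / 3) hn0 (by omega)).mpr hPz
        have hg1 : myP n (x + t) ↔ myP n x := by
          have h := golden s t n hs (by omega) hn (x + t) (by omega) (by omega)
          rwa [Nat.add_sub_cancel] at h
        obtain ⟨w, hw⟩ : ∃ w, x + t = 3 * w := ⟨(x + t) / 3, by omega⟩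
        have hwn : w < n := by omega
        have c1 : myP n (x + t) ↔ myP n w := by
          rw [hw]; exact moveM1 n w hn0 hwn
        have c2 : myP n (x + t + 1) ↔ myP n w := by
          rw [show x + t + 1 = 3 * w + 1 from by omega]
          exact moveM2 n w hn0 hwn
        have hg2 : myP n (x + 1 + t) ↔ myP n (x + 1) := by
          have h := golden s t n hs (by omega) hn (x + 1 + t) (by omega) (by omega)
          rwa [Nat.add_sub_cancel] at h
        have : myP n (x + t + 1) := by
          rw [show x + t + 1 = x + 1 + t from by omega]
          exact hg2.mpr hPx1
        exact hg1.mp (c1.mpr (c2.mp this))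
      · -- t ≡ 2 (mod 3)
        have hPy : myP n (x - 1) := IH (x - 1) (by omega) (by omega)
        have hg1 : myP n (x - 1 + t) ↔ myP n (x - 1) := by
          have h := golden s t n hs (by omega) hn (x - 1 + t) (by omega) (by omega)
          rwa [Nat.add_sub_cancel] at h
        obtain ⟨w, hw⟩ : ∃ w, x - 1 + t = 3 * w := ⟨(x - 1 + t) / 3, by omega⟩
        have hwn : w < n := by omega
        have c1 : myP n (x - 1 + t) ↔ myP n w := by
          rw [hw]; exact moveM1 n w hn0 hwn
        have c2 : myP n (x - 1 + t + 1) ↔ myP n w := by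
          rw [show x - 1 + t + 1 = 3 * w + 1 from by omega]
          exact moveM2 n w hn0 hwn
        have hg2 : myP n (x + t) ↔ myP n x := by
          have h := golden s t n hs (by omega) hn (x + t) (by omega) (by omega)
          rwa [Nat.add_sub_cancel] at h
        have : myP n (x + t) := by
          rw [show x + t = x - 1 + t + 1 from by omega]
          exact c2.mpr (c1.mp (hg1.mpr hPy))
        exact hg2.mp this

end StepOneAux

theorem step_one (s t n : ℕ) (hs : 1 ≤ s) (ht : 1 < t) (h3t : ¬ 3 ∣ t) (hn : n = 3 ^ s * t) :
    ∀ x : Fin (3 * n), (x : ℕ) < t →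
      ∃ g ∈ shuffleH n, g ⟨0, lt_of_le_of_lt (Nat.zero_le _) x.isLt⟩ = x := by
  intro x hx
  obtain ⟨h0, hvlt, g, hg, he⟩ := step_one_key s t n hs ht h3t hn (x : ℕ) hx
  refine ⟨g, hg, ?_⟩
  have hx' : (⟨(x : ℕ), hvlt⟩ : Fin (3 * n)) = x := Fin.ext rfl
  rw [← hx']
  exact he
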